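/- Let ρ_θ be a rank-r parameterized density matrix supported on projector Π with Π (∂_i ρ_θ) Π = 0 for all parameters i (derivatives take the state out of its support). Then for any POVM M on the d-dimensional space, Tr(J^{-1} I(M)) ≤ d − r. -/

import Mathlib

open Matrix ComplexOrder

section GMHelpers

variable {n : Type*} [Fintype n] [DecidableEq n]

open scoped MatrixOrder

noncomputable def Matrix.PosSemidef.sqrt {A : Matrix n n ℂ} (_hA : A.PosSemidef) :
    Matrix n n ℂ := CFC.sqrt A

lemma Matrix.PosSemidef.sqrt_mul_self {A : Matrix n n ℂ} (hA : A.PosSemidef) :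
    hA.sqrt * hA.sqrt = A := CFC.sqrt_mul_sqrt_self A hA.nonneg

lemma Matrix.PosSemidef.posSemidef_sqrt {A : Matrix n n ℂ} (hA : A.PosSemidef) :
    hA.sqrt.PosSemidef := (CFC.sqrt_nonneg A).posSemidef

lemma GM.diag_nonneg {A : Matrix n n ℂ} (hA : A.PosSemidef) (i : n) : 0 ≤ (A i i).re := by
  have := hA.re_dotProduct_nonneg (Pi.single i 1)
  simpa [dotProduct, Pi.single_apply] using this

lemma GM.trace_re_nonneg {A : Matrix n n ℂ} (hA : A.PosSemidef) : 0 ≤ A.trace.re := by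
  rw [Matrix.trace, Complex.re_sum]
  exact Finset.sum_nonneg fun i _ => GM.diag_nonneg hA i

lemma GM.two_re_trace_le (X Y : Matrix n n ℂ) :
    2 * (Xᴴ * Y).trace.re ≤ (Xᴴ * X).trace.re + (Yᴴ * Y).trace.re := by
  have h := GM.trace_re_nonneg (posSemidef_conjTranspose_mul_self (X - Y))
  have e : (X - Y)ᴴ * (X - Y) = Xᴴ * X - Xᴴ * Y - Yᴴ * X + Yᴴ * Y := by
    rw [conjTranspose_sub]; noncomm_ring
  rw [e] at h
  have h2 : (Yᴴ * X).trace = star ((Xᴴ * Y).trace) := by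
    rw [← trace_conjTranspose, conjTranspose_mul, conjTranspose_conjTranspose]
  have h3 : (Yᴴ * X).trace.re = (Xᴴ * Y).trace.re := by rw [h2]; simp
  simp only [trace_add, trace_sub, Complex.add_re, Complex.sub_re] at h
  linarith
variable {n : Type*} [Fintype n] [DecidableEq n]

lemma GM.tr_entry (C : Matrix n n ℂ) :
    (Cᴴ * C).trace.re = ∑ j, ∑ i, Complex.normSq (C i j) := by
  rw [Matrix.trace, Complex.re_sum]
  refine Finset.sum_congr rfl fun j _ => ?_
  rw [Matrix.diag_apply, Matrix.mul_apply, Complex.re_sum]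
  refine Finset.sum_congr rfl fun i _ => ?_
  rw [conjTranspose_apply, Complex.star_def, Complex.conj_mul', ← Complex.ofReal_pow,
    Complex.ofReal_re, Complex.sq_norm]

lemma GM.trace_mul_le {A B : Matrix n n ℂ} (hA : A.PosSemidef) (hB : B.PosSemidef) :
    (A * B).trace.re ≤ A.trace.re * B.trace.re := by
  set SA := hA.sqrt with hSAdef
  set SB := hB.sqrt with hSBdef
  have hSA : SA * SA = A := hA.sqrt_mul_self
  have hSB : SB * SB = B := hB.sqrt_mul_self
  have hSAh : SAᴴ = SA := hA.posSemidef_sqrt.isHermitian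
  have hSBh : SBᴴ = SB := hB.posSemidef_sqrt.isHermitian
  clear hSAdef hSBdef
  clear_value SA SB
  have key : (A * B).trace = ((SA * SB)ᴴ * (SA * SB)).trace := by
    calc (A * B).trace = ((SA * SA * SB) * SB).trace := by
          rw [← hSA, ← hSB]; congr 1; noncomm_ring
      _ = (SB * (SA * SA * SB)).trace := trace_mul_comm _ _
      _ = ((SA * SB)ᴴ * (SA * SB)).trace := by
          rw [conjTranspose_mul, hSAh, hSBh]; congr 1; noncomm_ring
  have trA : A.trace.re = ∑ i, ∑ k, Complex.normSq (SA i k) := by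
    have h := GM.tr_entry SA
    rw [hSAh, hSA] at h
    rw [h, Finset.sum_comm]
  have trB : B.trace.re = ∑ j, ∑ k, Complex.normSq (SB k j) := by
    have h := GM.tr_entry SB
    rw [hSBh, hSB] at h
    rw [h]
  rw [key, GM.tr_entry, trA, trB, Finset.sum_comm, Finset.sum_mul_sum]
  refine Finset.sum_le_sum fun i _ => Finset.sum_le_sum fun j _ => ?_
  rw [Matrix.mul_apply]
  have h1 : ‖∑ k, SA i k * SB k j‖ ≤ ∑ k, ‖SA i k‖ * ‖SB k j‖ :=
    (norm_sum_le _ _).trans_eq (Finset.sum_congr rfl fun k _ => norm_mul _ _)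
  have h2 : (∑ k, ‖SA i k‖ * ‖SB k j‖) ^ 2 ≤
      (∑ k, ‖SA i k‖ ^ 2) * ∑ k, ‖SB k j‖ ^ 2 :=
    Finset.sum_mul_sq_le_sq_mul_sq _ _ _
  have h3 : ‖∑ k, SA i k * SB k j‖ ^ 2 ≤ (∑ k, ‖SA i k‖ ^ 2) * ∑ k, ‖SB k j‖ ^ 2 :=
    (pow_le_pow_left₀ (norm_nonneg _) h1 2).trans h2
  have hn : ∀ z : ℂ, Complex.normSq z = ‖z‖ ^ 2 := fun z => by
    rw [Complex.normSq_eq_norm_sq]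
  simpa [hn] using h3
variable {n : Type*} [Fintype n] [DecidableEq n]

lemma GM.proj_psd {P : Matrix n n ℂ} (hh : P.IsHermitian) (hi : P * P = P) :
    P.PosSemidef := by
  have h : Pᴴ * P = P := by rw [hh.eq, hi]
  rw [← h]; exact posSemidef_conjTranspose_mul_self P

lemma GM.proj_trace_rank {P : Matrix n n ℂ} (hh : P.IsHermitian) (hi : P * P = P) :
    P.trace = (P.rank : ℂ) := by
  set U : Matrix n n ℂ := (hh.eigenvectorUnitary : Matrix n n ℂ) with hU
  have hsU : star U * U = 1 := Unitary.coe_star_mul_self hh.eigenvectorUnitary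
  have hUs : U * star U = 1 := Unitary.coe_mul_star_self hh.eigenvectorUnitary
  set d : n → ℂ := RCLike.ofReal ∘ hh.eigenvalues with hd
  have hdiag : star U * P * U = diagonal d := by
    have h := hh.conjStarAlgAut_star_eigenvectorUnitary
    rwa [Unitary.conjStarAlgAut_star_apply] at h
  have hsq : ∀ i, hh.eigenvalues i = 0 ∨ hh.eigenvalues i = 1 := by
    intro i
    have h2 : diagonal d * diagonal d = diagonal d := by
      rw [← hdiag]
      calc (star U * P * U) * (star U * P * U)
          = star U * (P * (U * star U) * P) * U := by noncomm_ring
        _ = star U * P * U := by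
            rw [hUs, show P * 1 * P = P * P by noncomm_ring, hi]
    rw [diagonal_mul_diagonal] at h2
    have h3 : d i * d i = d i := congr_fun (Matrix.diagonal_injective h2) i
    have h3' : hh.eigenvalues i * hh.eigenvalues i = hh.eigenvalues i := by
      apply Complex.ofReal_injective
      have := h3
      simp only [hd, Function.comp_apply] at this
      push_cast
      exact_mod_cast this
    have h4 : hh.eigenvalues i * (hh.eigenvalues i - 1) = 0 := by
      rw [mul_sub, mul_one, h3', sub_self]
    rcases mul_eq_zero.mp h4 with h | h
    · exact Or.inl h
    · exact Or.inr (by linarith [sub_eq_zero.mp h])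
  have htr : P.trace = ∑ i, d i := by
    conv_lhs => rw [hh.spectral_theorem, Unitary.conjStarAlgAut_apply]
    rw [trace_mul_cycle, ← hU, ← hd, hsU, Matrix.one_mul, trace_diagonal]
  have hrank : P.rank = Fintype.card {i // hh.eigenvalues i ≠ 0} :=
    hh.rank_eq_card_non_zero_eigs
  have hsum : ∑ i, hh.eigenvalues i =
      ((Finset.univ.filter (fun i => hh.eigenvalues i ≠ 0)).card : ℝ) := by
    rw [← Finset.sum_filter_ne_zero]
    rw [Finset.sum_congr rfl (fun i hi' => ?_), Finset.sum_const, nsmul_eq_mul, mul_one]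
    rcases hsq i with h | h
    · exact absurd h (Finset.mem_filter.mp hi').2
    · exact h
  rw [htr, hrank, Fintype.card_subtype]
  rw [show (∑ i, d i) = ((∑ i, hh.eigenvalues i : ℝ) : ℂ) by push_cast [hd]; rfl]
  rw [hsum]
  push_cast
  rfl

lemma GM.trace_mul_nonneg {A B : Matrix n n ℂ} (hA : A.PosSemidef) (hB : B.PosSemidef) :
    0 ≤ (A * B).trace.re := by
  set SA := hA.sqrt with hSAdef
  have hSA : SA * SA = A := hA.sqrt_mul_self
  have hSAh : SAᴴ = SA := hA.posSemidef_sqrt.isHermitian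
  have hpsd : (SA * B * SAᴴ).PosSemidef := hB.mul_mul_conjTranspose_same SA
  have h := GM.trace_re_nonneg hpsd
  have e : (SA * B * SAᴴ).trace = (A * B).trace := by
    rw [hSAh]
    calc (SA * B * SA).trace = (SA * (SA * B)).trace := trace_mul_comm _ _
      _ = (A * B).trace := by rw [show SA * (SA * B) = (SA * SA) * B by noncomm_ring, hSA]
  rwa [e] at h

lemma GM.re_tr_swap {A B C : Matrix n n ℂ} (hA : Aᴴ = A) (hB : Bᴴ = B) (hC : Cᴴ = C) :
    (A * (B * C)).trace.re = (A * (C * B)).trace.re := by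
  have h := trace_conjTranspose (A * (B * C))
  have e : (A * (B * C))ᴴ = (C * B) * A := by
    rw [conjTranspose_mul, conjTranspose_mul, hA, hB, hC]
  rw [e, trace_mul_comm] at h
  rw [h]
  simp

end GMHelpers

/-- Tightened Gill–Massar bound for a rank-`r` parameterized density matrix `ρ`
supported on the projector `Π` (so `Πρ = ρ` and `rank Π = rank ρ = r`), with
derivatives taking the state out of its support (`Π(∂_iρ)Π = 0`): for any POVM
`M` on the `d`-dimensional space, `Tr(J⁻¹ I(M)) ≤ d − r`, where `J` is the
(invertible) QFIM defined via symmetric logarithmic derivatives. -/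
theorem stmt11 {d m r : ℕ} {ι : Type*} [Fintype ι]
    (ρ : Matrix (Fin d) (Fin d) ℂ) (hρ : ρ.PosSemidef) (hρtr : ρ.trace = 1)
    (hrank : ρ.rank = r)
    (Pr : Matrix (Fin d) (Fin d) ℂ) (hPh : Pr.IsHermitian)
    (hPproj : Pr * Pr = Pr) (hPrank : Pr.rank = r) (hPρ : Pr * ρ = ρ)
    (dρ : Fin m → Matrix (Fin d) (Fin d) ℂ)
    (hherm : ∀ i, (dρ i).IsHermitian) (hdtr : ∀ i, (dρ i).trace = 0)
    (hsupp : ∀ i, Pr * dρ i * Pr = 0)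
    (L : Fin m → Matrix (Fin d) (Fin d) ℂ)
    (hLh : ∀ i, (L i).IsHermitian)
    (hSLD : ∀ i, dρ i = (2:ℂ)⁻¹ • (L i * ρ + ρ * L i))
    (J : Matrix (Fin m) (Fin m) ℝ)
    (hJ : ∀ i j, J i j = ((2:ℂ)⁻¹ • (ρ * (L i * L j + L j * L i))).trace.re)
    (hJu : IsUnit J.det)
    (M : ι → Matrix (Fin d) (Fin d) ℂ)
    (hM : ∀ x, (M x).PosSemidef) (hMsum : ∑ x, M x = 1)
    (I : Matrix (Fin m) (Fin m) ℝ)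
    (hI : ∀ i j, I i j = ∑ x, if 0 < (ρ * M x).trace.re then
        (dρ i * M x).trace.re * (dρ j * M x).trace.re / (ρ * M x).trace.re
      else 0) :
    (J⁻¹ * I).trace ≤ (d : ℝ) - (r : ℝ) := by
  classical
  have hρh : ρᴴ = ρ := hρ.isHermitian
  have hρP : ρ * Pr = ρ := by
    have h := congrArg conjTranspose hPρ
    rwa [conjTranspose_mul, hPh.eq, hρ.isHermitian.eq] at h
  set Sρ := hρ.sqrt with hSρdef
  have hSρ2 : Sρ * Sρ = ρ := hρ.sqrt_mul_self
  have hSρh : Sρᴴ = Sρ := hρ.posSemidef_sqrt.isHermitian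
  clear_value Sρ
  set Q : Matrix (Fin d) (Fin d) ℂ := 1 - Pr with hQdef
  have hQh : Qᴴ = Q := by rw [hQdef, conjTranspose_sub, conjTranspose_one, hPh.eq]
  have hQQ : Q * Q = Q := by
    have e : (1 - Pr) * (1 - Pr) = 1 - Pr - Pr + Pr * Pr := by noncomm_ring
    rw [hQdef, e, hPproj]; abel
  have hQpsd : Q.PosSemidef := GM.proj_psd hQh hQQ
  have hQρ : Q * ρ = 0 := by rw [hQdef, sub_mul, one_mul, hPρ, sub_self]
  have hQSρ : Q * Sρ = 0 := by
    have h0 : (Q * Sρ) * (Q * Sρ)ᴴ = 0 := by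
      rw [conjTranspose_mul, hSρh, hQh,
        show Q * Sρ * (Sρ * Q) = Q * (Sρ * Sρ) * Q by noncomm_ring, hSρ2,
        show Q * ρ * Q = (Q * ρ) * Q by noncomm_ring, hQρ, zero_mul]
    exact Matrix.self_mul_conjTranspose_eq_zero.mp h0
  have hPSρ : Pr * Sρ = Sρ := by
    have h := hQSρ
    rw [hQdef, sub_mul, one_mul, sub_eq_zero] at h
    exact h.symm
  set p : ι → ℝ := fun x => (ρ * M x).trace.re with hp
  set g : ι → ℝ := fun x => (Q * M x).trace.re with hg
  set v : ι → Fin m → ℝ := fun x i => (dρ i * M x).trace.re with hv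
  -- sum of g
  have hgnn : ∀ x, 0 ≤ g x := fun x => GM.trace_mul_nonneg hQpsd (hM x)
  have hgsum : ∑ x, g x = (d : ℝ) - r := by
    have h1 : ∑ x, (Q * M x).trace = Q.trace := by
      rw [← trace_sum]
      rw [← Finset.mul_sum, hMsum, mul_one]
    have h2 : Q.trace = (d : ℂ) - (r : ℂ) := by
      rw [hQdef, trace_sub, trace_one, GM.proj_trace_rank hPh hPproj, hPrank]
      simp
    have h3 : (∑ x, (Q * M x).trace).re = ∑ x, g x := by
      rw [Complex.re_sum]
    rw [← h3, h1, h2]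
    simp
  -- trace decomposition
  have hI' : ∀ i j, I i j = ∑ x, if 0 < p x then v x i * v x j / p x else 0 := fun i j => hI i j
  have htrace : (J⁻¹ * I).trace =
      ∑ x, if 0 < p x then (∑ i, ∑ j, J⁻¹ i j * (v x j * v x i)) / p x else 0 := by
    have t1 : (J⁻¹ * I).trace = ∑ i, ∑ j, J⁻¹ i j * I j i := by
      simp [Matrix.trace, Matrix.mul_apply, Matrix.diag]
    rw [t1]
    simp_rw [hI', Finset.mul_sum]
    rw [Finset.sum_comm]
    rw [Finset.sum_congr rfl fun j _ => Finset.sum_comm]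
    rw [Finset.sum_comm]
    refine Finset.sum_congr rfl fun x _ => ?_
    by_cases hc : 0 < p x
    · simp only [hc, if_true, Finset.sum_div]
      rw [Finset.sum_comm]
      refine Finset.sum_congr rfl fun i _ => ?_
      refine Finset.sum_congr rfl fun j _ => by ring
    · simp [hc]
  -- main per-x bound
  have hkeyx : ∀ x, 0 < p x → (∑ i, ∑ j, J⁻¹ i j * (v x j * v x i)) ≤ p x * g x := by
    intro x hc
    set a : Fin m → ℝ := J⁻¹.mulVec (v x) with ha
    have hai : ∀ i, a i = ∑ j, J⁻¹ i j * v x j := fun i => rfl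
    have hSa : ∑ i, ∑ j, J⁻¹ i j * (v x j * v x i) = ∑ i, a i * v x i := by
      refine Finset.sum_congr rfl fun i _ => ?_
      rw [hai, Finset.sum_mul]
      exact Finset.sum_congr rfl fun j _ => by ring
    have hJv : J.mulVec a = v x := by
      rw [ha, Matrix.mulVec_mulVec, Matrix.mul_nonsing_inv J hJu, Matrix.one_mulVec]
    have hquad : ∑ i, ∑ j, a i * J i j * a j = ∑ i, a i * v x i := by
      refine Finset.sum_congr rfl fun i _ => ?_
      have e : ∑ j, a i * J i j * a j = a i * (J.mulVec a) i := by
        rw [Matrix.mulVec, dotProduct, Finset.mul_sum]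
        exact Finset.sum_congr rfl fun j _ => by ring
      rw [e, hJv]
    clear ha
    clear_value a
    -- matrices La and Dm
    set La : Matrix (Fin d) (Fin d) ℂ := ∑ i, (a i : ℂ) • L i with hLa
    set Dm : Matrix (Fin d) (Fin d) ℂ := ∑ i, (a i : ℂ) • dρ i with hDm
    have hLah : Laᴴ = La := by
      rw [hLa, conjTranspose_sum]
      exact Finset.sum_congr rfl fun i _ => by
        rw [conjTranspose_smul, (hLh i).eq]
        simp [Complex.star_def]
    have hDmh : Dmᴴ = Dm := by
      rw [hDm, conjTranspose_sum]
      exact Finset.sum_congr rfl fun i _ => by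
        rw [conjTranspose_smul, (hherm i).eq]
        simp [Complex.star_def]
    have hDm2 : Dm = (2:ℂ)⁻¹ • (La * ρ + ρ * La) := by
      rw [hDm, hLa]
      simp_rw [hSLD, Finset.sum_mul, Finset.mul_sum, smul_mul_assoc, mul_smul_comm, smul_add,
        Finset.sum_add_distrib, Finset.smul_sum, smul_smul]
      congr 1 <;> exact Finset.sum_congr rfl fun i _ => by rw [mul_comm]
    have hPDP : Pr * Dm * Pr = 0 := by
      have e : Pr * Dm * Pr = ∑ i, (a i : ℂ) • (Pr * dρ i * Pr) := by
        rw [hDm, Finset.mul_sum, Finset.sum_mul]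
        exact Finset.sum_congr rfl fun i _ => by rw [mul_smul_comm, smul_mul_assoc]
      rw [e]
      simp [hsupp]
    have hDv : (Dm * M x).trace.re = ∑ i, a i * v x i := by
      have e : Dm * M x = ∑ i, (a i : ℂ) • (dρ i * M x) := by
        rw [hDm, Finset.sum_mul]
        exact Finset.sum_congr rfl fun i _ => smul_mul_assoc _ _ _
      rw [e, trace_sum, Complex.re_sum]
      refine Finset.sum_congr rfl fun i _ => ?_
      rw [trace_smul]
      simp [Complex.re_ofReal_mul, hv]
    -- M' and its properties
    set M' : Matrix (Fin d) (Fin d) ℂ := M x - Pr * M x * Pr with hM'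
    have hM'h : M'ᴴ = M' := by
      rw [hM', conjTranspose_sub, (hM x).isHermitian.eq, conjTranspose_mul, conjTranspose_mul,
        hPh.eq, (hM x).isHermitian.eq, Matrix.mul_assoc]
    have htrDM : (Dm * M x).trace = (Dm * M').trace := by
      have h1 : Dm * M' = Dm * M x - Dm * (Pr * M x * Pr) := by rw [hM', mul_sub]
      have h2 : (Dm * (Pr * M x * Pr)).trace = ((Pr * Dm * Pr) * M x).trace := by
        calc (Dm * (Pr * M x * Pr)).trace = ((Dm * Pr * M x) * Pr).trace := by
              congr 1; noncomm_ring
          _ = (Pr * (Dm * Pr * M x)).trace := (trace_mul_comm _ _).symm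
          _ = ((Pr * Dm * Pr) * M x).trace := by congr 1; noncomm_ring
      rw [h1, trace_sub, h2, hPDP, zero_mul, trace_zero, sub_zero]
    have hDM' : (Dm * M').trace.re = (ρ * (La * M')).trace.re := by
      have e0 : (Dm * M').trace = (2:ℂ)⁻¹ * ((La * ρ * M').trace + (ρ * (La * M')).trace) := by
        rw [hDm2, smul_mul_assoc, trace_smul, smul_eq_mul]
        congr 1
        rw [add_mul, trace_add, Matrix.mul_assoc ρ La M']
      have e1 : (La * ρ * M').trace = (ρ * (M' * La)).trace := by
        rw [trace_mul_cycle]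
        exact trace_mul_comm _ _
      have e2 : (ρ * (M' * La)).trace.re = (ρ * (La * M')).trace.re :=
        GM.re_tr_swap hρh hM'h hLah
      rw [e0, show (2:ℂ)⁻¹ = ((2⁻¹:ℝ):ℂ) by norm_num, Complex.re_ofReal_mul, Complex.add_re,
        e1]
      rw [e2]
      ring
    -- Cauchy-Schwarz
    have hCS := GM.two_re_trace_le (La * Sρ) (M' * Sρ)
    have e1 : ((La * Sρ)ᴴ * (M' * Sρ)).trace = (ρ * (La * M')).trace := by
      rw [conjTranspose_mul, hSρh, hLah]
      calc (Sρ * La * (M' * Sρ)).trace = ((Sρ * La * M') * Sρ).trace := by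
            congr 1; noncomm_ring
        _ = (Sρ * (Sρ * La * M')).trace := (trace_mul_comm _ _).symm
        _ = (ρ * (La * M')).trace := by
            rw [show Sρ * (Sρ * La * M') = (Sρ * Sρ) * (La * M') by noncomm_ring, hSρ2]
    have e2 : ((La * Sρ)ᴴ * (La * Sρ)).trace = (ρ * (La * La)).trace := by
      rw [conjTranspose_mul, hSρh, hLah]
      calc (Sρ * La * (La * Sρ)).trace = ((Sρ * La * La) * Sρ).trace := by
            congr 1; noncomm_ring
        _ = (Sρ * (Sρ * La * La)).trace := (trace_mul_comm _ _).symm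
        _ = (ρ * (La * La)).trace := by
            rw [show Sρ * (Sρ * La * La) = (Sρ * Sρ) * (La * La) by noncomm_ring, hSρ2]
    have hM'S : M' * Sρ = Q * M x * Sρ := by
      rw [hM', hQdef, sub_mul, sub_mul, one_mul, sub_mul,
        show Pr * M x * Pr * Sρ = Pr * M x * (Pr * Sρ) by noncomm_ring, hPSρ]
    have e3 : ((M' * Sρ)ᴴ * (M' * Sρ)).trace = (ρ * (M x * (Q * M x))).trace := by
      rw [hM'S, conjTranspose_mul, conjTranspose_mul, hSρh, hQh, (hM x).isHermitian.eq]
      calc (Sρ * (M x * Q) * (Q * M x * Sρ)).trace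
          = ((Sρ * M x * (Q * Q) * M x) * Sρ).trace := by congr 1; noncomm_ring
        _ = (Sρ * (Sρ * M x * (Q * Q) * M x)).trace := (trace_mul_comm _ _).symm
        _ = (ρ * (M x * (Q * M x))).trace := by
            rw [hQQ, show Sρ * (Sρ * M x * Q * M x) = (Sρ * Sρ) * (M x * (Q * M x)) by
              noncomm_ring, hSρ2]
    have hCS' : 2 * (ρ * (La * M')).trace.re ≤
        (ρ * (La * La)).trace.re + (ρ * (M x * (Q * M x))).trace.re := by
      rw [e1, e2, e3] at hCS
      exact hCS
    have hJexp : ∀ i j, J i j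
        = 2⁻¹ * ((ρ * (L i * L j)).trace.re + (ρ * (L j * L i)).trace.re) := by
      intro i j
      rw [hJ i j, mul_add, trace_smul, trace_add,
        show (2:ℂ)⁻¹ = ((2⁻¹:ℝ):ℂ) by norm_num, smul_eq_mul, Complex.re_ofReal_mul,
        Complex.add_re]
    have eLL : La * La = ∑ i, ∑ j, ((a i : ℂ) * (a j : ℂ)) • (L i * L j) := by
      rw [hLa, Finset.sum_mul_sum]
      exact Finset.sum_congr rfl fun i _ => Finset.sum_congr rfl fun j _ =>
        smul_mul_smul_comm _ _ _ _
    have hρLL : (ρ * (La * La)).trace.re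
        = ∑ i, ∑ j, a i * a j * (ρ * (L i * L j)).trace.re := by
      have e : ρ * (La * La) = ∑ i, ∑ j, ((a i : ℂ) * (a j : ℂ)) • (ρ * (L i * L j)) := by
        rw [eLL, Finset.mul_sum]
        refine Finset.sum_congr rfl fun i _ => ?_
        rw [Finset.mul_sum]
        exact Finset.sum_congr rfl fun j _ => mul_smul_comm _ _ _
      rw [e, trace_sum, Complex.re_sum]
      refine Finset.sum_congr rfl fun i _ => ?_
      rw [trace_sum, Complex.re_sum]
      refine Finset.sum_congr rfl fun j _ => ?_
      rw [trace_smul, smul_eq_mul, show ((a i : ℂ) * (a j : ℂ)) = ((a i * a j : ℝ) : ℂ) by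
        push_cast; ring, Complex.re_ofReal_mul]
    have hquad2 : ∑ i, ∑ j, a i * J i j * a j = (ρ * (La * La)).trace.re := by
      rw [hρLL]
      have hsw : ∑ i, ∑ j, a i * a j * (ρ * (L j * L i)).trace.re
          = ∑ i, ∑ j, a i * a j * (ρ * (L i * L j)).trace.re := by
        rw [Finset.sum_comm]
        exact Finset.sum_congr rfl fun i _ => Finset.sum_congr rfl fun j _ => by ring
      calc ∑ i, ∑ j, a i * J i j * a j
          = ∑ i, ∑ j, (2⁻¹ * (a i * a j * (ρ * (L i * L j)).trace.re)
            + 2⁻¹ * (a i * a j * (ρ * (L j * L i)).trace.re)) := by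
            refine Finset.sum_congr rfl fun i _ => Finset.sum_congr rfl fun j _ => ?_
            rw [hJexp]; ring
        _ = 2⁻¹ * (∑ i, ∑ j, a i * a j * (ρ * (L i * L j)).trace.re)
            + 2⁻¹ * (∑ i, ∑ j, a i * a j * (ρ * (L j * L i)).trace.re) := by
            simp only [Finset.sum_add_distrib, Finset.mul_sum]
        _ = _ := by rw [hsw]; ring
    -- final bound on the Q-term
    have hfin : (ρ * (M x * (Q * M x))).trace.re ≤ p x * g x := by
      set SM := (hM x).sqrt with hSMdef
      have hSM2 : SM * SM = M x := (hM x).sqrt_mul_self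
      have hSMh : SMᴴ = SM := (hM x).posSemidef_sqrt.isHermitian
      clear_value SM
      have hApsd : (SM * ρ * SM).PosSemidef := by
        have h := hρ.mul_mul_conjTranspose_same SM
        rwa [hSMh] at h
      have hBpsd : (SM * Q * SM).PosSemidef := by
        have h := hQpsd.mul_mul_conjTranspose_same SM
        rwa [hSMh] at h
      have h := GM.trace_mul_le hApsd hBpsd
      have eA : (SM * ρ * SM).trace = (ρ * M x).trace := by
        calc (SM * ρ * SM).trace = (SM * (SM * ρ)).trace := trace_mul_comm _ _
          _ = (ρ * M x).trace := by
              rw [show SM * (SM * ρ) = (SM * SM) * ρ by noncomm_ring, hSM2, trace_mul_comm]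
      have eB : (SM * Q * SM).trace = (Q * M x).trace := by
        calc (SM * Q * SM).trace = (SM * (SM * Q)).trace := trace_mul_comm _ _
          _ = (Q * M x).trace := by
              rw [show SM * (SM * Q) = (SM * SM) * Q by noncomm_ring, hSM2, trace_mul_comm]
      have eAB : ((SM * ρ * SM) * (SM * Q * SM)).trace = (ρ * (M x * (Q * M x))).trace := by
        calc ((SM * ρ * SM) * (SM * Q * SM)).trace
            = (SM * (ρ * (SM * SM) * Q * SM)).trace := by congr 1; noncomm_ring
          _ = ((ρ * (SM * SM) * Q * SM) * SM).trace := trace_mul_comm _ _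
          _ = (ρ * (M x * (Q * M x))).trace := by
              rw [hSM2, show ρ * M x * Q * SM * SM = ρ * (M x * (Q * (SM * SM))) by
                noncomm_ring, hSM2]
      rw [eA, eB, eAB] at h
      exact h
    -- assemble
    have hv1 : ∑ i, a i * v x i = (ρ * (La * M')).trace.re := by
      rw [← hDv]
      have := congrArg Complex.re htrDM
      rw [this, hDM']
    have hv2 : (ρ * (La * La)).trace.re = ∑ i, a i * v x i := by
      rw [← hquad2, hquad]
    rw [hSa, hv1]
    linarith [hCS', hfin, hv2, hv1]
  -- conclude
  rw [htrace]
  have hle : ∀ x ∈ Finset.univ,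
      (if 0 < p x then (∑ i, ∑ j, J⁻¹ i j * (v x j * v x i)) / p x else 0) ≤ g x := by
    intro x _
    by_cases hc : 0 < p x
    · simp only [hc, if_true]
      rw [div_le_iff₀ hc]
      calc ∑ i, ∑ j, J⁻¹ i j * (v x j * v x i) ≤ p x * g x := hkeyx x hc
        _ = g x * p x := by ring
    · simp only [hc, if_false]
      exact hgnn x
  calc ∑ x, (if 0 < p x then (∑ i, ∑ j, J⁻¹ i j * (v x j * v x i)) / p x else 0)
      ≤ ∑ x, g x := Finset.sum_le_sum hle
    _ = (d : ℝ) - r := hgsum
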